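/- arXiv:2510.18828 — 2 statements merged into one kernel-verified Lean document; each statement's English description precedes it below -/
import Mathlib

section
/- With the wire-fitting interpolant $f(u) = \frac{\sum_i y_i w_i(u)}{\sum_i w_i(u)}$, $w_i(u) = 1/(|u-u_i|^2 + c_i(y_{\max}-y_i))$, $c_i > 0$, suppose $j$ is an index attaining the maximum value, $y_j = y_{\max} = \max_k y_k$, and the control points are distinct. Then $\lim_{u \to u_j} f(u) = y_{\max}$, i.e., the continuous extension of $f$ attains its global maximum $y_{\max}$ at the control-point $u_j$. -/
/-- The continuous extension of the wire-fitting interpolant attains the global maximum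
value `ymax` at the maximizing control-point `a j`. -/
theorem wire_fitting_tendsto_max
    (d N : ℕ) (y : Fin N → ℝ) (a : Fin N → EuclideanSpace ℝ (Fin d))
    (c : Fin N → ℝ) (hc : ∀ i, 0 < c i) (hinj : Function.Injective a)
    (ymax : ℝ) (hub : ∀ k, y k ≤ ymax)
    (j : Fin N) (hj : y j = ymax) :
    Filter.Tendsto
      (fun u : EuclideanSpace ℝ (Fin d) =>
        (∑ i, y i * (‖u - a i‖ ^ 2 + c i * (ymax - y i))⁻¹) /
          (∑ i, (‖u - a i‖ ^ 2 + c i * (ymax - y i))⁻¹))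
      (nhdsWithin (a j) {a j}ᶜ) (nhds ymax) := by
  set D : Fin N → EuclideanSpace ℝ (Fin d) → ℝ :=
    fun i u => ‖u - a i‖ ^ 2 + c i * (ymax - y i) with hD
  have hDpos : ∀ i, i ≠ j → 0 < D i (a j) := by
    intro i hi
    have hne : a j - a i ≠ 0 := by
      intro h
      exact hi (hinj (sub_eq_zero.mp h)).symm
    have h1 : 0 < ‖a j - a i‖ ^ 2 := pow_pos (norm_pos_iff.mpr hne) 2
    have h2 : 0 ≤ c i * (ymax - y i) :=
      mul_nonneg (hc i).le (sub_nonneg.2 (hub i))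
    simp only [hD]
    linarith
  set h : Fin N → EuclideanSpace ℝ (Fin d) → ℝ :=
    fun i u => ‖u - a j‖ ^ 2 * (D i u)⁻¹ with hh
  set F : EuclideanSpace ℝ (Fin d) → ℝ := fun u =>
    (y j + ∑ i ∈ ({j}ᶜ : Finset (Fin N)), y i * h i u) /
      (1 + ∑ i ∈ ({j}ᶜ : Finset (Fin N)), h i u) with hF
  -- limits of the auxiliary functions
  have hhlim : ∀ i, i ≠ j →
      Filter.Tendsto (h i) (nhds (a j)) (nhds 0) := by
    intro i hi
    have hnorm : Filter.Tendsto (fun u : EuclideanSpace ℝ (Fin d) => ‖u - a j‖ ^ 2)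
        (nhds (a j)) (nhds 0) := by
      have : Continuous (fun u : EuclideanSpace ℝ (Fin d) => ‖u - a j‖ ^ 2) := by
        continuity
      have h0 : ‖(a j : EuclideanSpace ℝ (Fin d)) - a j‖ ^ 2 = 0 := by simp
      simpa [h0] using this.tendsto (a j)
    have hDcont : Filter.Tendsto (fun u => (D i u)⁻¹) (nhds (a j))
        (nhds ((D i (a j))⁻¹)) := by
      have hc : Continuous (D i) := by
        simp only [hD]
        continuity
      exact (hc.tendsto (a j)).inv₀ (hDpos i hi).ne'
    simpa using hnorm.mul hDcont
  have hFlim : Filter.Tendsto F (nhds (a j)) (nhds ymax) := by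
    have hnum : Filter.Tendsto
        (fun u => y j + ∑ i ∈ ({j}ᶜ : Finset (Fin N)), y i * h i u)
        (nhds (a j)) (nhds (y j)) := by
      have : Filter.Tendsto
          (fun u => ∑ i ∈ ({j}ᶜ : Finset (Fin N)), y i * h i u)
          (nhds (a j)) (nhds 0) := by
        have := tendsto_finset_sum ({j}ᶜ : Finset (Fin N))
          (fun i hi => (Filter.Tendsto.const_mul (y i)
            (hhlim i (by simpa using hi))))
        simpa using this
      simpa using (tendsto_const_nhds.add this)
    have hden : Filter.Tendsto
        (fun u => 1 + ∑ i ∈ ({j}ᶜ : Finset (Fin N)), h i u)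
        (nhds (a j)) (nhds 1) := by
      have : Filter.Tendsto
          (fun u => ∑ i ∈ ({j}ᶜ : Finset (Fin N)), h i u)
          (nhds (a j)) (nhds 0) := by
        have := tendsto_finset_sum ({j}ᶜ : Finset (Fin N))
          (fun i hi => hhlim i (by simpa using hi))
        simpa using this
      simpa using (tendsto_const_nhds.add this)
    have := hnum.div hden one_ne_zero
    simpa [hF, hj, Pi.div_def] using this
  -- eventual equality
  have heq : ∀ u : EuclideanSpace ℝ (Fin d), u ≠ a j →
      (∑ i, y i * (D i u)⁻¹) / (∑ i, (D i u)⁻¹) = F u := by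
    intro u hu
    set t : ℝ := ‖u - a j‖ ^ 2 with htdef
    have ht : t ≠ 0 := by
      have h0 : u - a j ≠ 0 := sub_ne_zero.2 hu
      exact (pow_pos (norm_pos_iff.mpr h0) 2).ne'
    have hDj : D j u = t := by simp [hD, hj, htdef]
    have hnum : (∑ i, y i * (D i u)⁻¹) * t
        = y j + ∑ i ∈ ({j}ᶜ : Finset (Fin N)), y i * h i u := by
      rw [Finset.sum_mul, Fintype.sum_eq_add_sum_compl j]
      congr 1
      · rw [hDj]
        field_simp
      · apply Finset.sum_congr rfl
        intro i _
        simp only [hh]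
        ring
    have hden : (∑ i, (D i u)⁻¹) * t
        = 1 + ∑ i ∈ ({j}ᶜ : Finset (Fin N)), h i u := by
      rw [Finset.sum_mul, Fintype.sum_eq_add_sum_compl j]
      congr 1
      · rw [hDj]
        field_simp
      · apply Finset.sum_congr rfl
        intro i _
        simp only [hh]
        ring
    simp only [hF]
    rw [← hnum, ← hden, mul_div_mul_right _ _ ht]
  refine ((hFlim.mono_left nhdsWithin_le_nhds).congr' ?_)
  filter_upwards [self_mem_nhdsWithin] with u hu
  exact (heq u hu).symm
end

section
/- Consider the wire-fitting weights $w_i(a) = 1/(|a - a_i| + c \Delta_i)$ with common smoothing $c > 0$ and $\Delta_i = \max_k y_k - y_i$. As $c \to 0^+$, for each control-point index $m$ with $a_m$ distinct from all other $a_i$: $\lim_{c \to 0^+} f(a_m) = y_m$, where $f(a) = \sum_i y_i w_i(a) / \sum_i w_i(a)$ (extended by continuity). That is, with vanishing smoothing the interpolant passes exactly through every control-point. -/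
open Finset in
/-- Wire-fitting interpolant with common smoothing `c`, extended by continuity where a
weight denominator vanishes. -/
noncomputable def wireFitExt {d N : ℕ} (a : Fin N → EuclideanSpace ℝ (Fin d))
    (y Δ : Fin N → ℝ) (c : ℝ) (u : EuclideanSpace ℝ (Fin d)) : ℝ :=
  if h : ∃ i, ‖u - a i‖ + c * Δ i = 0 then y h.choose
  else (∑ i, y i * (‖u - a i‖ + c * Δ i)⁻¹) / (∑ i, (‖u - a i‖ + c * Δ i)⁻¹)

/-- As the smoothing parameter `c → 0⁺`, the wire-fitting interpolant passes exactly
through every control-point. -/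
theorem wire_fitting_vanishing_smoothing_interpolates
    (d N : ℕ) (hne : (Finset.univ : Finset (Fin N)).Nonempty)
    (a : Fin N → EuclideanSpace ℝ (Fin d)) (hinj : Function.Injective a)
    (y Δ : Fin N → ℝ) (hΔ : ∀ i, Δ i = Finset.univ.sup' hne y - y i) :
    ∀ m : Fin N,
      Filter.Tendsto (fun c : ℝ => wireFitExt a y Δ c (a m))
        (nhdsWithin 0 (Set.Ioi 0)) (nhds (y m)) := by
  intro m
  have hΔ0 : ∀ i, 0 ≤ Δ i := by
    intro i
    rw [hΔ i, sub_nonneg]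
    exact Finset.le_sup' y (Finset.mem_univ i)
  have hd : ∀ i, i ≠ m → 0 < ‖a m - a i‖ := by
    intro i hi
    rw [norm_pos_iff, sub_ne_zero]
    exact fun h => hi (hinj h.symm)
  rcases eq_or_lt_of_le (hΔ0 m) with hm | hm
  · -- Δ m = 0 : the extension is in force, f(a m) = y m exactly
    have key : ∀ c ∈ Set.Ioi (0:ℝ), wireFitExt a y Δ c (a m) = y m := by
      intro c hc
      have hex : ∃ i, ‖a m - a i‖ + c * Δ i = 0 := ⟨m, by simp [← hm]⟩
      rw [wireFitExt, dif_pos hex]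
      have hj := hex.choose_spec
      have h1 : ‖a m - a hex.choose‖ = 0 := by
        have h2 := mul_nonneg (le_of_lt (Set.mem_Ioi.mp hc)) (hΔ0 hex.choose)
        nlinarith [norm_nonneg (a m - a hex.choose)]
      have h3 : a hex.choose = a m := by
        rw [norm_eq_zero, sub_eq_zero] at h1; exact h1.symm
      rw [hinj h3]
    refine Filter.Tendsto.congr' ?_ tendsto_const_nhds
    filter_upwards [self_mem_nhdsWithin] with c hc
    exact (key c hc).symm
  · -- Δ m > 0 : rescale weights by c * Δ m
    set g : Fin N → ℝ → ℝ := fun i c => (c * Δ m) * (‖a m - a i‖ + c * Δ i)⁻¹ with hg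
    have hgt : ∀ i, Filter.Tendsto (fun c => g i c) (nhdsWithin 0 (Set.Ioi 0))
        (nhds (if i = m then 1 else 0)) := by
      intro i
      by_cases him : i = m
      · subst him
        simp only [if_pos rfl]
        refine Filter.Tendsto.congr' ?_ tendsto_const_nhds
        filter_upwards [self_mem_nhdsWithin] with c hc
        have hc0 : (0:ℝ) < c := hc
        have : c * Δ i ≠ 0 := (mul_pos hc0 hm).ne'
        simp only [hg, sub_self, norm_zero, zero_add]
        exact (mul_inv_cancel₀ this).symm
      · simp only [if_neg him]
        have h1 : Filter.Tendsto (fun c : ℝ => c * Δ m) (nhdsWithin 0 (Set.Ioi 0)) (nhds 0) := by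
          have := (show Continuous (fun c : ℝ => c * Δ m) from continuous_id.mul (continuous_const (y := Δ m))).tendsto (0:ℝ)
          simpa using this.mono_left nhdsWithin_le_nhds
        have h2 : Filter.Tendsto (fun c : ℝ => (‖a m - a i‖ + c * Δ i)⁻¹)
            (nhdsWithin 0 (Set.Ioi 0)) (nhds (‖a m - a i‖)⁻¹) := by
          apply Filter.Tendsto.inv₀
          · have hcont : Continuous (fun c : ℝ => ‖a m - a i‖ + c * Δ i) := by continuity
            have := hcont.tendsto 0
            simpa using this.mono_left nhdsWithin_le_nhds
          · exact (hd i him).ne'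
        simpa using h1.mul h2
    have hNum : Filter.Tendsto (fun c => ∑ i, y i * g i c) (nhdsWithin 0 (Set.Ioi 0))
        (nhds (y m)) := by
      have := tendsto_finset_sum Finset.univ (fun i (_ : i ∈ Finset.univ) =>
        ((hgt i).const_mul (y i)))
      simpa [mul_ite, Finset.sum_ite_eq'] using this
    have hDen : Filter.Tendsto (fun c => ∑ i, g i c) (nhdsWithin 0 (Set.Ioi 0))
        (nhds 1) := by
      have := tendsto_finset_sum Finset.univ (fun i (_ : i ∈ Finset.univ) => hgt i)
      simpa [Finset.sum_ite_eq'] using this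
    have key : ∀ c ∈ Set.Ioi (0:ℝ),
        wireFitExt a y Δ c (a m) = (∑ i, y i * g i c) / (∑ i, g i c) := by
      intro c hc
      have hc0 : (0:ℝ) < c := hc
      have hpos : ∀ i, 0 < ‖a m - a i‖ + c * Δ i := by
        intro i
        rcases eq_or_ne i m with rfl | hi
        · simpa using mul_pos hc0 hm
        · exact add_pos_of_pos_of_nonneg (hd i hi) (mul_nonneg hc0.le (hΔ0 i))
      have hex : ¬ ∃ i, ‖a m - a i‖ + c * Δ i = 0 := by
        rintro ⟨i, hi⟩; exact (hpos i).ne' hi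
      rw [wireFitExt, dif_neg hex]
      have hcm : c * Δ m ≠ 0 := (mul_pos hc0 hm).ne'
      have e1 : (∑ i, y i * g i c)
          = (c * Δ m) * ∑ i, y i * (‖a m - a i‖ + c * Δ i)⁻¹ := by
        rw [Finset.mul_sum]; apply Finset.sum_congr rfl; intro i _; simp [hg]; ring
      have e2 : (∑ i, g i c) = (c * Δ m) * ∑ i, (‖a m - a i‖ + c * Δ i)⁻¹ := by
        rw [Finset.mul_sum]
      rw [e1, e2, mul_div_mul_left _ _ hcm]
    have final := hNum.div hDen one_ne_zero
    rw [div_one] at final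
    refine Filter.Tendsto.congr' ?_ final
    filter_upwards [self_mem_nhdsWithin] with c hc
    exact (key c hc).symm
end
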